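/- Let a, b, c : (ρ₀, ∞) → ℝ be positive C¹ functions satisfying 2bca' = b² - a² + c² and 2acb' = a² - b² + c² on (ρ₀, ∞), and suppose T := b/a extends continuously to ρ₀ with T(ρ₀) = 1. Then T(ρ) = 1 for all ρ > ρ₀, i.e. a = b on (ρ₀, ∞). -/

import Mathlib

/-- Symmetry enhancement (Lemma 3.2, second part): if `a, b, c > 0` are `C¹` on `(ρ₀, ∞)`
solving the Kähler ODE system `2bca' = b² - a² + c²`, `2acb' = a² - b² + c²`, and
`T = b/a` extends continuously to `ρ₀` with value `1`, then `a = b` on `(ρ₀, ∞)`. -/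
theorem stmt_1 (ρ₀ : ℝ) (a b c a' b' : ℝ → ℝ)
    (hapos : ∀ ρ ∈ Set.Ioi ρ₀, 0 < a ρ)
    (hbpos : ∀ ρ ∈ Set.Ioi ρ₀, 0 < b ρ)
    (hcpos : ∀ ρ ∈ Set.Ioi ρ₀, 0 < c ρ)
    (hc : ContinuousOn c (Set.Ioi ρ₀))
    (hda : ∀ ρ ∈ Set.Ioi ρ₀, HasDerivAt a (a' ρ) ρ)
    (hdb : ∀ ρ ∈ Set.Ioi ρ₀, HasDerivAt b (b' ρ) ρ)
    (hda' : ContinuousOn a' (Set.Ioi ρ₀))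
    (hdb' : ContinuousOn b' (Set.Ioi ρ₀))
    (hode1 : ∀ ρ ∈ Set.Ioi ρ₀, 2 * b ρ * c ρ * a' ρ = (b ρ) ^ 2 - (a ρ) ^ 2 + (c ρ) ^ 2)
    (hode2 : ∀ ρ ∈ Set.Ioi ρ₀, 2 * a ρ * c ρ * b' ρ = (a ρ) ^ 2 - (b ρ) ^ 2 + (c ρ) ^ 2)
    (hlim : Filter.Tendsto (fun ρ => b ρ / a ρ) (nhdsWithin ρ₀ (Set.Ioi ρ₀)) (nhds 1)) :
    ∀ ρ ∈ Set.Ioi ρ₀, b ρ = a ρ := by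
  set V : ℝ → ℝ := fun ρ => (b ρ / a ρ - 1) ^ 2 with hVdef
  -- key algebraic identity: c * (b' a - a' b) = a² - b²
  have key : ∀ ρ ∈ Set.Ioi ρ₀, c ρ * (b' ρ * a ρ - a' ρ * b ρ) = (a ρ) ^ 2 - (b ρ) ^ 2 := by
    intro ρ hρ
    have h1 := hode1 ρ hρ
    have h2 := hode2 ρ hρ
    have ha := (hapos ρ hρ).ne'
    have hb := (hbpos ρ hρ).ne'
    have hab : (2 : ℝ) * (a ρ * b ρ) ≠ 0 := by
      have := (hapos ρ hρ); have := (hbpos ρ hρ); positivity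
    apply mul_left_cancel₀ hab
    linear_combination (a ρ * b ρ) * h2 - (a ρ * b ρ) * h1
  -- derivative of V
  have hVderiv : ∀ ρ ∈ Set.Ioi ρ₀,
      HasDerivAt V (2 * (b ρ / a ρ - 1) ^ 1 * ((b' ρ * a ρ - b ρ * a' ρ) / (a ρ) ^ 2)) ρ := by
    intro ρ hρ
    have hdiv : HasDerivAt (fun x => b x / a x - 1)
        ((b' ρ * a ρ - b ρ * a' ρ) / (a ρ) ^ 2) ρ :=
      ((hdb ρ hρ).div (hda ρ hρ) (hapos ρ hρ).ne').sub_const 1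
    simpa using hdiv.fun_pow 2
  have hVderiv_nonpos : ∀ ρ ∈ Set.Ioi ρ₀,
      2 * (b ρ / a ρ - 1) ^ 1 * ((b' ρ * a ρ - b ρ * a' ρ) / (a ρ) ^ 2) ≤ 0 := by
    intro ρ hρ
    have ha := hapos ρ hρ
    have hb := hbpos ρ hρ
    have hcp := hcpos ρ hρ
    have hk := key ρ hρ
    have hwab : b' ρ * a ρ - a' ρ * b ρ = ((a ρ) ^ 2 - (b ρ) ^ 2) / c ρ := by
      field_simp
      linarith [hk]
    have : 2 * (b ρ / a ρ - 1) ^ 1 * ((b' ρ * a ρ - b ρ * a' ρ) / (a ρ) ^ 2)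
        = -(2 * (a ρ - b ρ) ^ 2 * (a ρ + b ρ) / ((a ρ) ^ 3 * c ρ)) := by
      rw [show b' ρ * a ρ - b ρ * a' ρ = b' ρ * a ρ - a' ρ * b ρ by ring, hwab]
      field_simp
      ring
    rw [this]
    have hnum : 0 ≤ 2 * (a ρ - b ρ) ^ 2 * (a ρ + b ρ) := by positivity
    have hden : 0 < (a ρ) ^ 3 * c ρ := by positivity
    have := div_nonneg hnum hden.le
    linarith
  -- V is antitone on Ioi ρ₀
  have hVcont : ContinuousOn V (Set.Ioi ρ₀) :=
    fun ρ hρ => ((hVderiv ρ hρ).continuousAt).continuousWithinAt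
  have hVanti : AntitoneOn V (Set.Ioi ρ₀) := by
    apply antitoneOn_of_deriv_nonpos (convex_Ioi ρ₀) hVcont
    · intro x hx
      rw [interior_Ioi] at hx
      exact ((hVderiv x hx).differentiableAt).differentiableWithinAt
    · intro x hx
      rw [interior_Ioi] at hx
      rw [(hVderiv x hx).deriv]
      exact hVderiv_nonpos x hx
  -- V tends to 0 at ρ₀⁺
  have hVlim : Filter.Tendsto V (nhdsWithin ρ₀ (Set.Ioi ρ₀)) (nhds 0) := by
    have : Filter.Tendsto (fun ρ => (b ρ / a ρ - 1) ^ 2) (nhdsWithin ρ₀ (Set.Ioi ρ₀))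
        (nhds ((1 - 1) ^ 2)) := (hlim.sub tendsto_const_nhds).pow 2
    simpa using this
  -- conclude
  intro ρ hρ
  have hev : ∀ᶠ x in nhdsWithin ρ₀ (Set.Ioi ρ₀), V ρ ≤ V x := by
    filter_upwards [Filter.inter_mem self_mem_nhdsWithin
      (nhdsWithin_le_nhds (Iio_mem_nhds hρ))] with x hx
    exact hVanti hx.1 hρ (le_of_lt hx.2)
  have hle : V ρ ≤ 0 := ge_of_tendsto hVlim hev
  have hge : 0 ≤ V ρ := sq_nonneg _
  have hV0 : (b ρ / a ρ - 1) ^ 2 = 0 := le_antisymm hle hge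
  have : b ρ / a ρ = 1 := by
    have := pow_eq_zero_iff (n := 2) (by norm_num) |>.mp hV0
    linarith
  exact (div_eq_one_iff_eq (hapos ρ hρ).ne').mp this
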